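/- Strong consistency of the unnormalized importance-sampling estimator: almost surely, (1/n) · ∑_{i<n} (p(X_i)/q(X_i)) · f(X_i) converges to ∫ f dP as n → ∞. -/

import Mathlib

open MeasureTheory ProbabilityTheory Filter Topology
open scoped NNReal ENNReal

/-- **Strong consistency of the unnormalized importance-sampling estimator.**
Let `ν` be a σ-finite measure, `p q : E → ℝ≥0` measurable densities such that
`P := ν.withDensity p` and `Q := ν.withDensity q` are probability measures, with
`q x = 0 → p x = 0` for `ν`-a.e. `x`.  If `(X i)` is an i.i.d. sequence with law `Q`
and `f` is measurable and `P`-integrable, then almost surely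
`(1/n) * ∑_{i<n} (p (X i) / q (X i)) * f (X i) → ∫ f dP`. -/
theorem importance_sampling_unnormalized_strong_consistency
    {E Ω : Type*} [MeasurableSpace E] [MeasurableSpace Ω]
    (ν : Measure E) [SigmaFinite ν]
    (p q : E → ℝ≥0) (hp : Measurable p) (hq : Measurable q)
    [IsProbabilityMeasure (ν.withDensity fun x => (p x : ℝ≥0∞))]
    [IsProbabilityMeasure (ν.withDensity fun x => (q x : ℝ≥0∞))]
    (habs : ∀ᵐ x ∂ν, q x = 0 → p x = 0)
    (μ : Measure Ω) [IsProbabilityMeasure μ]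
    (X : ℕ → Ω → E) (hXmeas : ∀ i, Measurable (X i))
    (hindep : iIndepFun X μ)
    (hlaw : ∀ i, Measure.map (X i) μ = ν.withDensity fun x => (q x : ℝ≥0∞))
    (f : E → ℝ) (hf : Measurable f)
    (hfint : Integrable f (ν.withDensity fun x => (p x : ℝ≥0∞))) :
    ∀ᵐ ω ∂μ, Tendsto
      (fun n : ℕ => (1 / (n : ℝ)) * ∑ i ∈ Finset.range n,
        ((p (X i ω) : ℝ) / (q (X i ω) : ℝ)) * f (X i ω))
      atTop (𝓝 (∫ x, f x ∂(ν.withDensity fun x => (p x : ℝ≥0∞)))) := by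
  set g : E → ℝ := fun x => ((p x : ℝ) / (q x : ℝ)) * f x with hg_def
  have hgm : Measurable g :=
    (hp.coe_nnreal_real.div hq.coe_nnreal_real).mul hf
  have hae : (fun x => (q x : ℝ) • g x) =ᵐ[ν] fun x => (p x : ℝ) • f x := by
    filter_upwards [habs] with x hx
    by_cases h : q x = 0
    · simp [hg_def, h, hx h]
    · have hq0 : (q x : ℝ) ≠ 0 := by exact_mod_cast h
      simp only [hg_def, smul_eq_mul]
      field_simp
  have hfP : Integrable (fun x => (p x : ℝ) • f x) ν :=
    (integrable_withDensity_iff_integrable_smul hp).mp hfint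
  have hgQ : Integrable g (ν.withDensity fun x => (q x : ℝ≥0∞)) :=
    (integrable_withDensity_iff_integrable_smul hq).mpr (hfP.congr hae.symm)
  have hint_eq : ∫ x, g x ∂(ν.withDensity fun x => (q x : ℝ≥0∞))
      = ∫ x, f x ∂(ν.withDensity fun x => (p x : ℝ≥0∞)) := by
    rw [integral_withDensity_eq_integral_smul hq, integral_withDensity_eq_integral_smul hp]
    exact integral_congr_ae hae
  set Y : ℕ → Ω → ℝ := fun i ω => g (X i ω) with hY_def
  have hYint : Integrable (Y 0) μ := by
    have := (integrable_map_measure hgm.aestronglyMeasurable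
      (hXmeas 0).aemeasurable).mp (by rw [hlaw 0]; exact hgQ)
    exact this
  have hYindep : Pairwise (Function.onFun (IndepFun · · μ) Y) := fun i j hij =>
    (hindep.indepFun hij).comp hgm hgm
  have hYident : ∀ i, IdentDistrib (Y i) (Y 0) μ μ := fun i =>
    IdentDistrib.comp ⟨(hXmeas i).aemeasurable, (hXmeas 0).aemeasurable,
      by rw [hlaw i, hlaw 0]⟩ hgm
  have hmean : μ[Y 0] = ∫ x, f x ∂(ν.withDensity fun x => (p x : ℝ≥0∞)) := by
    rw [hY_def]
    rw [← integral_map (hXmeas 0).aemeasurable hgm.aestronglyMeasurable, hlaw 0, hint_eq]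
  have := strong_law_ae_real Y hYint hYindep hYident
  rw [hmean] at this
  filter_upwards [this] with ω hω
  convert hω using 2 with n
  rw [one_div, inv_mul_eq_div]
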